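/- Let ξ = ((m_1,n_1),(m_2,n_2)) be a Newton polygon with two segments such that n_1 m_2 > m_1 n_2 (first slope strictly larger) and n_2 ≥ m_2 (second slope ≥ 1/2), and let ξ^C = ((m_1,n_1−m_1),(m_2,n_2−m_2)) be its curtailment (again a Newton polygon). Let i, j satisfy m_1 < i ≤ n_1 and 1 ≤ j ≤ m_2, and consider u = (1,i), v = (2,j), which lie both in T(ξ^C) and, via the inclusion φ(r,l) = (r,l), in T(ξ). Suppose u < v in T(ξ). Then there exists a generic specialization of S(ξ) by (u,v) if and only if there exists a generic specialization of S(ξ^C) by (u,v). -/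
import Mathlib


open scoped Classical

noncomputable section

/-- Symbols `(r, i)` (1-indexed component `r`, 1-indexed position `i`). -/
abbrev Symb : Type := ℕ × ℕ

/-- A Newton polygon: a finite list of coprime pairs `(m_r, n_r)` with `m_r + n_r > 0`
and weakly decreasing slopes `n_r / (m_r + n_r)`. -/
structure NewtonPolygon where
  seg : List (ℕ × ℕ)
  coprime : ∀ p ∈ seg, Nat.Coprime p.1 p.2
  pos : ∀ p ∈ seg, 0 < p.1 + p.2
  slopes : ∀ r q : Fin seg.length, r ≤ q →
    ((seg.get q).2 : ℚ) / (((seg.get q).1 : ℚ) + ((seg.get q).2 : ℚ)) ≤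
      ((seg.get r).2 : ℚ) / (((seg.get r).1 : ℚ) + ((seg.get r).2 : ℚ))

namespace NewtonPolygon

/-- The number `z` of segments. -/
def z (ξ : NewtonPolygon) : ℕ := ξ.seg.length

/-- `m_r` (1-indexed). -/
def m (ξ : NewtonPolygon) (r : ℕ) : ℕ := (ξ.seg.getD (r - 1) (0, 0)).1

/-- `n_r` (1-indexed). -/
def n (ξ : NewtonPolygon) (r : ℕ) : ℕ := (ξ.seg.getD (r - 1) (0, 0)).2

/-- `h_r = m_r + n_r`. -/
def h (ξ : NewtonPolygon) (r : ℕ) : ℕ := ξ.m r + ξ.n r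

/-- Membership in the symbol set `T(ξ) = {(r,i) : 1 ≤ r ≤ z, 1 ≤ i ≤ h_r}`. -/
def mem (ξ : NewtonPolygon) (t : Symb) : Prop :=
  1 ≤ t.1 ∧ t.1 ≤ ξ.z ∧ 1 ≤ t.2 ∧ t.2 ≤ ξ.h t.1

/-- The symbol set `T(ξ)` as a finset. -/
def Tfin (ξ : NewtonPolygon) : Finset Symb :=
  ((Finset.Icc 1 ξ.z) ×ˢ (Finset.Icc 1 (ξ.seg.foldr (fun p s => p.1 + p.2 + s) 0))).filter
    (fun t => t.2 ≤ ξ.h t.1)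

/-- The map `δ : T(ξ) → {0,1}`; `δ(r,i) = 1` iff `i ≤ m_r`. -/
def dlt (ξ : NewtonPolygon) (t : Symb) : ℕ := if t.2 ≤ ξ.m t.1 then 1 else 0

/-- The bijection `π(r, i) = (r, ((i - m_r - 1) mod h_r) + 1)`. -/
def pmap (ξ : NewtonPolygon) (t : Symb) : Symb :=
  (t.1, (((t.2 : ℤ) - (ξ.m t.1 : ℤ) - 1) % ((ξ.h t.1 : ℤ))).toNat + 1)

/-- The inverse of `π`: `π⁻¹(r, i) = (r, ((i + m_r - 1) mod h_r) + 1)`. -/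
def pinv (ξ : NewtonPolygon) (t : Symb) : Symb :=
  (t.1, (((t.2 : ℤ) + (ξ.m t.1 : ℤ) - 1) % ((ξ.h t.1 : ℤ))).toNat + 1)

/-- Binary expansion `b(t) = ∑_{k ≥ 1} δ(π^{-k}(t)) · 2^{-k}`. -/
def bexp (ξ : NewtonPolygon) (t : Symb) : ℝ :=
  ∑' k : ℕ, (ξ.dlt (ξ.pinv^[k + 1] t) : ℝ) / 2 ^ (k + 1)

/-- The linear order on `T(ξ)`: `t < t'` iff `b(t) < b(t')`, or `b(t) = b(t')` and
`t` is in an earlier component. -/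
def slt (ξ : NewtonPolygon) (t t' : Symb) : Prop :=
  ξ.bexp t < ξ.bexp t' ∨ (ξ.bexp t = ξ.bexp t' ∧ t.1 < t'.1)

/-- The length `ℓ(ξ)`: the number of pairs `t < t'` with `δ(t) = 0` and `δ(t') = 1`. -/
def len (ξ : NewtonPolygon) : ℕ :=
  ((ξ.Tfin ×ˢ ξ.Tfin).filter (fun p => ξ.slt p.1 p.2 ∧ ξ.dlt p.1 = 0 ∧ ξ.dlt p.2 = 1)).card

/-- `π' = τ ∘ π`, the permutation of the small modification by `(u, v)`. -/
def pmod (ξ : NewtonPolygon) (u v : Symb) (t : Symb) : Symb := Equiv.swap u v (ξ.pmap t)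

/-- The inverse of `π'`. -/
def pmodInv (ξ : NewtonPolygon) (u v : Symb) (t : Symb) : Symb := ξ.pinv (Equiv.swap u v t)

/-- `b'(t) = ∑_{k ≥ 1} δ(π'^{-k}(t)) · 2^{-k}` of the small modification by `(u, v)`. -/
def bmod (ξ : NewtonPolygon) (u v : Symb) (t : Symb) : ℝ :=
  ∑' k : ℕ, (ξ.dlt ((ξ.pmodInv u v)^[k + 1] t) : ℝ) / 2 ^ (k + 1)

/-- The order of the small modification by `(u, v)`: the order of `S(ξ)` with the
positions of `u` and `v` exchanged. -/
def lt0 (ξ : NewtonPolygon) (u v : Symb) (t t' : Symb) : Prop :=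
  ξ.slt (Equiv.swap u v t) (Equiv.swap u v t')

/-- `R` is a specialization of `S(ξ)` by `(u, v)`: a strict linear order on `T(ξ)`
such that `t ≺ t'` implies `b'(t) ≤ b'(t')`. -/
def IsSpec (ξ : NewtonPolygon) (u v : Symb) (R : Symb → Symb → Prop) : Prop :=
  (∀ t ∈ ξ.Tfin, ¬ R t t) ∧
  (∀ t ∈ ξ.Tfin, ∀ t' ∈ ξ.Tfin, ∀ t'' ∈ ξ.Tfin, R t t' → R t' t'' → R t t'') ∧
  (∀ t ∈ ξ.Tfin, ∀ t' ∈ ξ.Tfin, t ≠ t' → R t t' ∨ R t' t) ∧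
  (∀ t ∈ ξ.Tfin, ∀ t' ∈ ξ.Tfin, R t t' → ξ.bmod u v t ≤ ξ.bmod u v t')

/-- The length `ℓ(≺)` of an order `R`: the number of pairs `t ≺ t'` in `T(ξ)` with
`δ(t) = 0` and `δ(t') = 1`. -/
def lenR (ξ : NewtonPolygon) (R : Symb → Symb → Prop) : ℕ :=
  ((ξ.Tfin ×ˢ ξ.Tfin).filter (fun p => R p.1 p.2 ∧ ξ.dlt p.1 = 0 ∧ ξ.dlt p.2 = 1)).card

/-- There exists a generic specialization of `S(ξ)` by `(u, v)`. -/
def ExGeneric (ξ : NewtonPolygon) (u v : Symb) : Prop :=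
  ∃ R : Symb → Symb → Prop, ξ.IsSpec u v R ∧ (ξ.lenR R : ℤ) = (ξ.len : ℤ) - 1

/-- `α_k = π'^k(u)`. -/
def alpha (ξ : NewtonPolygon) (u v : Symb) (k : ℕ) : Symb := (ξ.pmod u v)^[k] u

/-- `β_k = π'^k(v)`. -/
def beta (ξ : NewtonPolygon) (u v : Symb) (k : ℕ) : Symb := (ξ.pmod u v)^[k] v

/-- The set `A_k` computed with respect to an order `R`. -/
def AsetOf (ξ : NewtonPolygon) (u v : Symb) (R : Symb → Symb → Prop) (k : ℕ) : Finset Symb :=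
  ξ.Tfin.filter (fun t =>
    (if k = 0 then ξ.dlt t = 0 else t.1 ≠ v.1 ∧ ξ.dlt t = ξ.dlt (ξ.alpha u v k)) ∧
    R t (ξ.alpha u v k) ∧ R (ξ.alpha u v (k + 1)) (ξ.pmod u v t))

/-- The maximum of a finset for an order `R`. -/
def maxOf (R : Symb → Symb → Prop) (s : Finset Symb) : Symb :=
  if hmax : ∃ t, t ∈ s ∧ ∀ t' ∈ s, t' ≠ t → R t' t then hmax.choose else (0, 0)

/-- The minimum of a finset for an order `R`. -/
def minOf (R : Symb → Symb → Prop) (s : Finset Symb) : Symb :=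
  if hmin : ∃ t, t ∈ s ∧ ∀ t' ∈ s, t' ≠ t → R t t' then hmin.choose else (0, 0)

/-- The pairs `(t, t')` reversed in a step of Construction A: `t = α_k` and
`α_k <_{k-1} t' ≤_{k-1} w` where `w = π'(t_max)`. -/
def revA (R : Symb → Symb → Prop) (a w : Symb) (t t' : Symb) : Prop :=
  t = a ∧ R t t' ∧ (R t' w ∨ t' = w)

/-- One step of Construction A. -/
def stepA (R : Symb → Symb → Prop) (a w : Symb) : Symb → Symb → Prop :=
  fun t t' => (R t t' ∧ ¬ revA R a w t t') ∨ revA R a w t' t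

/-- The pairs `(t, t')` reversed in a step of Construction B: `t' = β_k` and
`w ≤_{k-1} t <_{k-1} β_k` where `w = π'(t_min)`. -/
def revB (R : Symb → Symb → Prop) (b w : Symb) (t t' : Symb) : Prop :=
  t' = b ∧ R t t' ∧ (R w t ∨ t = w)

/-- One step of Construction B. -/
def stepB (R : Symb → Symb → Prop) (b w : Symb) : Symb → Symb → Prop :=
  fun t t' => (R t t' ∧ ¬ revB R b w t t') ∨ revB R b w t' t

/-- The order `<_k` of Construction A (for `k ≥ 1`, meaningful when `A_{k-1} ≠ ∅`). -/
def ordA (ξ : NewtonPolygon) (u v : Symb) : ℕ → Symb → Symb → Prop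
  | 0 => ξ.lt0 u v
  | k + 1 =>
      stepA (ordA ξ u v k) (ξ.alpha u v (k + 1))
        (ξ.pmod u v (maxOf (ordA ξ u v k) (ξ.AsetOf u v (ordA ξ u v k) k)))

/-- The set `A_k` of Construction A. -/
def Aset (ξ : NewtonPolygon) (u v : Symb) (k : ℕ) : Finset Symb :=
  ξ.AsetOf u v (ordA ξ u v k) k

/-- The set `B_k` computed with respect to an order `R`. -/
def BsetOf (ξ : NewtonPolygon) (u v : Symb) (R : Symb → Symb → Prop) (k : ℕ) : Finset Symb :=
  ξ.Tfin.filter (fun t =>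
    (if k = 0 then ξ.dlt t = 1 else ξ.dlt t = ξ.dlt (ξ.beta u v k)) ∧
    R (ξ.beta u v k) t ∧ R (ξ.pmod u v t) (ξ.beta u v (k + 1)))

/-- The order `<_{a+k}` of Construction B (for `k ≥ 1`, meaningful when `B_{k-1} ≠ ∅`). -/
def ordB (ξ : NewtonPolygon) (u v : Symb) (a : ℕ) : ℕ → Symb → Symb → Prop
  | 0 => ordA ξ u v a
  | k + 1 =>
      stepB (ordB ξ u v a k) (ξ.beta u v (k + 1))
        (ξ.pmod u v (minOf (ordB ξ u v a k) (ξ.BsetOf u v (ordB ξ u v a k) k)))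

/-- The set `B_k` of Construction B. -/
def Bset (ξ : NewtonPolygon) (u v : Symb) (a k : ℕ) : Finset Symb :=
  ξ.BsetOf u v (ordB ξ u v a k) k

end NewtonPolygon

set_option maxHeartbeats 1000000

namespace S15



noncomputable def sval (c : ℕ → ℕ) : ℝ := ∑' k, (c k : ℝ) / 2 ^ (k + 1)

lemma pw_eq (n : ℕ) : ((1:ℝ)/2) ^ n = 1 / 2 ^ n := by rw [div_pow, one_pow]

lemma sval_summable (c : ℕ → ℕ) (hc : ∀ k, c k ≤ 1) :
    Summable (fun k : ℕ => (c k : ℝ) / 2 ^ (k + 1)) := by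
  have hgeo : Summable (fun k : ℕ => ((1:ℝ)/2) ^ (k+1)) := by
    have := summable_geometric_two.mul_right ((1:ℝ)/2)
    refine this.congr (fun k => ?_)
    rw [pow_succ]
  refine Summable.of_nonneg_of_le (fun k => by positivity) (fun k => ?_) hgeo
  rw [pw_eq]
  have h2 : (c k : ℝ) ≤ 1 := by exact_mod_cast hc k
  gcongr

lemma sval_congr (c c' : ℕ → ℕ) (h : ∀ k, c k = c' k) : sval c = sval c' := by
  unfold sval; congr 1; funext k; rw [h]

lemma sval_lt (c c' : ℕ → ℕ) (hc : ∀ k, c k ≤ 1) (hc' : ∀ k, c' k ≤ 1)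
    (p q : ℕ) (hpq : p < q) (hpre : ∀ k < p, c k = c' k)
    (hp : c p = 0) (hp' : c' p = 1) (hq' : c' q = 1) :
    sval c < sval c' := by
  have hsf := sval_summable c hc
  have hsf' := sval_summable c' hc'
  have hsplit : sval c = (∑ k ∈ Finset.range (p+1), (c k : ℝ) / 2 ^ (k+1)) +
      ∑' k, ((c (k + (p+1)) : ℝ) / 2 ^ ((k + (p+1)) + 1)) :=
    (Summable.sum_add_tsum_nat_add (p+1) hsf).symm
  have hsplit' : sval c' = (∑ k ∈ Finset.range (p+1), (c' k : ℝ) / 2 ^ (k+1)) +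
      ∑' k, ((c' (k + (p+1)) : ℝ) / 2 ^ ((k + (p+1)) + 1)) :=
    (Summable.sum_add_tsum_nat_add (p+1) hsf').symm
  have hhead : ∑ k ∈ Finset.range (p+1), (c k : ℝ) / 2 ^ (k+1)
      = ∑ k ∈ Finset.range p, (c' k : ℝ) / 2 ^ (k+1) := by
    rw [Finset.sum_range_succ, hp]
    simp only [Nat.cast_zero, zero_div, add_zero]
    exact Finset.sum_congr rfl (fun k hk => by rw [hpre k (Finset.mem_range.1 hk)])
  have hhead' : ∑ k ∈ Finset.range (p+1), (c' k : ℝ) / 2 ^ (k+1)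
      = (∑ k ∈ Finset.range p, (c' k : ℝ) / 2 ^ (k+1)) + 1 / 2 ^ (p+1) := by
    rw [Finset.sum_range_succ, hp', Nat.cast_one]
  have htail : (∑' k, ((c (k + (p+1)) : ℝ) / 2 ^ ((k + (p+1)) + 1)))
      ≤ 1 / 2 ^ (p+1) := by
    have hb : ∀ k : ℕ, (c (k + (p+1)) : ℝ) / 2 ^ ((k + (p+1)) + 1)
        ≤ ((1:ℝ)/2) ^ (p+2) * (1/2) ^ k := by
      intro k
      have h3 : ((1:ℝ)/2) ^ (p+2) * (1/2) ^ k = 1 / 2 ^ ((k + (p+1)) + 1) := by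
        have he : p+2+k = (k + (p+1)) + 1 := by omega
        rw [← pow_add, he, pw_eq]
      rw [h3]
      have h2 : (c (k + (p+1)) : ℝ) ≤ 1 := by exact_mod_cast hc _
      gcongr
    have hgs : Summable (fun k : ℕ => ((1:ℝ)/2) ^ (p+2) * (1/2) ^ k) :=
      summable_geometric_two.mul_left _
    have h4 : (∑' k, ((c (k + (p+1)) : ℝ) / 2 ^ ((k + (p+1)) + 1)))
        ≤ ∑' k, ((1:ℝ)/2) ^ (p+2) * (1/2) ^ k :=
      Summable.tsum_le_tsum hb ((summable_nat_add_iff (f := fun k => (c k : ℝ) / 2 ^ (k+1)) (p+1)).2 hsf) hgs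
    have h5 : (∑' k : ℕ, ((1:ℝ)/2) ^ (p+2) * (1/2) ^ k) = ((1:ℝ)/2) ^ (p+2) * 2 := by
      rw [tsum_mul_left, tsum_geometric_two]
    have h6 : ((1:ℝ)/2) ^ (p+2) * 2 = 1 / 2 ^ (p+1) := by
      rw [pw_eq, pow_succ]; ring
    linarith
  have htail' : (1:ℝ) / 2 ^ (q+1)
      ≤ ∑' k, ((c' (k + (p+1)) : ℝ) / 2 ^ ((k + (p+1)) + 1)) := by
    have hsum' : Summable (fun k : ℕ => (c' (k + (p+1)) : ℝ) / 2 ^ ((k + (p+1)) + 1)) :=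
      (summable_nat_add_iff (f := fun k => (c' k : ℝ) / 2 ^ (k+1)) (p+1)).2 hsf'
    have hle := Summable.le_tsum hsum' (q - (p+1)) (fun j _ => by positivity)
    have hqe : q - (p+1) + (p+1) = q := by omega
    rw [hqe, hq'] at hle
    simpa using hle
  have hq0 : (0:ℝ) < 1 / 2 ^ (q+1) := by positivity
  rw [hsplit, hsplit', hhead, hhead']
  linarith

lemma seq_first_diff (c c' : ℕ → ℕ) (h : ¬ ∀ k, c k = c' k) :
    ∃ p, (∀ k < p, c k = c' k) ∧ c p ≠ c' p := by
  push_neg at h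
  classical
  refine ⟨Nat.find h, fun k hk => ?_, Nat.find_spec h⟩
  by_contra hne
  exact absurd hk (not_lt.2 (Nat.find_le hne))

lemma mod_inj_aux {H x y : ℕ} (h : x % H = y % H) (hxy : x ≤ y)
    (hlt : y < x + H) : x = y := by
  have hd : H ∣ y - x := (Nat.modEq_iff_dvd' hxy).1 h
  rcases hd with ⟨k, hk⟩
  rcases Nat.eq_zero_or_pos k with rfl | hkpos
  · omega
  · have : H * 1 ≤ H * k := Nat.mul_le_mul_left H hkpos
    omega

lemma exists_period (s : Finset Symb) (g : Symb → Symb)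
    (hmap : ∀ t ∈ s, g t ∈ s) (hinj : ∀ t ∈ s, ∀ t' ∈ s, g t = g t' → t = t')
    {t : Symb} (ht : t ∈ s) : ∃ P, 0 < P ∧ ∀ K, g^[K + P] t = g^[K] t := by
  have hiter : ∀ K, g^[K] t ∈ s := by
    intro K; induction K with
    | zero => simpa using ht
    | succ K ih => rw [Function.iterate_succ_apply']; exact hmap _ ih
  obtain ⟨a, ha, b, hb, hab, heq⟩ :=
    Finset.exists_ne_map_eq_of_card_lt_of_maps_to
      (s := Finset.range (s.card + 1)) (t := s)
      (by rw [Finset.card_range]; omega) (fun K _ => hiter K)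
  have hcan : ∀ a : ℕ, ∀ x y : Symb, x ∈ s → y ∈ s → g^[a] x = g^[a] y → x = y := by
    intro a; induction a with
    | zero => intro x y _ _ h; simpa using h
    | succ a ih =>
      intro x y hx hy h
      rw [Function.iterate_succ_apply, Function.iterate_succ_apply] at h
      exact hinj _ hx _ hy (ih _ _ (hmap _ hx) (hmap _ hy) h)
  have key : ∀ a b : ℕ, a < b → g^[a] t = g^[b] t →
      ∃ P, 0 < P ∧ ∀ K, g^[K + P] t = g^[K] t := by
    intro a b hab heq
    have hfix : g^[b - a] t = t := by
      have h1 : g^[a] (g^[b-a] t) = g^[a] t := by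
        rw [← Function.iterate_add_apply]
        rw [show a + (b - a) = b by omega]
        exact heq.symm
      exact hcan a _ _ (hiter _) ht h1
    refine ⟨b - a, by omega, fun K => ?_⟩
    rw [Function.iterate_add_apply, hfix]
  rcases Ne.lt_or_gt hab with hlt | hlt
  · exact key a b hlt heq
  · exact key b a hlt heq.symm


end S15

namespace S15

structure Ctx where
  m1 : ℕ
  n1 : ℕ
  m2 : ℕ
  n2 : ℕ
  ξ : NewtonPolygon
  ξC : NewtonPolygon
  w : Symb → Symb
  hm1 : m1 ≤ n1
  hm2 : m2 ≤ n2
  hn1 : 1 ≤ n1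
  hn2 : 1 ≤ n2
  hseg : ξ.seg = [(m1, n1), (m2, n2)]
  hsegC : ξC.seg = [(m1, n1 - m1), (m2, n2 - m2)]
  hwinj : Function.Injective w
  hw1 : ∀ t : Symb, (t.1 = 1 ∨ t.1 = 2) → 1 ≤ t.2 → t.2 ≤ (if t.1 = 1 then n1 else n2) →
        ((w t).1 = 1 ∨ (w t).1 = 2) ∧ 1 ≤ (w t).2 ∧
          (w t).2 ≤ (if (w t).1 = 1 then n1 else n2)
  hw2 : ∀ t : Symb, (if t.1 = 1 then n1 else n2) < t.2 → w t = t

namespace Ctx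

variable (c : Ctx)

def Nv (r : ℕ) : ℕ := if r = 1 then c.n1 else c.n2
def Mv (r : ℕ) : ℕ := if r = 1 then c.m1 else c.m2
def VC (t : Symb) : Prop := (t.1 = 1 ∨ t.1 = 2) ∧ 1 ≤ t.2 ∧ t.2 ≤ c.Nv t.1
def EX (t : Symb) : Prop := (t.1 = 1 ∨ t.1 = 2) ∧ c.Nv t.1 < t.2 ∧ t.2 ≤ c.Mv t.1 + c.Nv t.1

lemma MN (r : ℕ) : c.Mv r ≤ c.Nv r := by
  unfold Mv Nv; split <;> [exact c.hm1; exact c.hm2]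

lemma N1 (r : ℕ) : 1 ≤ c.Nv r := by
  unfold Nv; split <;> [exact c.hn1; exact c.hn2]

lemma m_eval (r : ℕ) (hr : r = 1 ∨ r = 2) : c.ξ.m r = c.Mv r := by
  rcases hr with rfl | rfl <;> simp [NewtonPolygon.m, c.hseg, Mv]

lemma n_eval (r : ℕ) (hr : r = 1 ∨ r = 2) : c.ξ.n r = c.Nv r := by
  rcases hr with rfl | rfl <;> simp [NewtonPolygon.n, c.hseg, Nv]

lemma h_eval (r : ℕ) (hr : r = 1 ∨ r = 2) : c.ξ.h r = c.Mv r + c.Nv r := by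
  rw [NewtonPolygon.h, c.m_eval r hr, c.n_eval r hr]

lemma mC_eval (r : ℕ) (hr : r = 1 ∨ r = 2) : c.ξC.m r = c.Mv r := by
  rcases hr with rfl | rfl <;> simp [NewtonPolygon.m, c.hsegC, Mv]

lemma hC_eval (r : ℕ) (hr : r = 1 ∨ r = 2) : c.ξC.h r = c.Nv r := by
  have h1 := c.hm1; have h2 := c.hm2
  rcases hr with rfl | rfl <;>
    simp [NewtonPolygon.h, NewtonPolygon.m, NewtonPolygon.n, c.hsegC, Mv, Nv] <;> omega

lemma vc_w (t : Symb) (ht : c.VC t) : c.VC (c.w t) := by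
  obtain ⟨h1, h2, h3⟩ := ht
  have := c.hw1 t h1 h2 (by simpa [Nv] using h3)
  exact ⟨this.1, this.2.1, by simpa [Nv] using this.2.2⟩

lemma ex_w (t : Symb) (ht : c.EX t) : c.w t = t :=
  c.hw2 t (by simpa [Nv] using ht.2.1)

end Ctx

/-- evaluate pinv in ℕ terms -/
lemma pinv_eval (P : NewtonPolygon) (t : Symb) (a b : ℕ)
    (hm : P.m t.1 = a) (hh : P.h t.1 = b) (hb : 0 < b) (hl : 1 ≤ t.2) :
    P.pinv t = (t.1, (t.2 + a - 1) % b + 1) := by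
  unfold NewtonPolygon.pinv
  rw [hm, hh]
  have h1 : ((t.2 : ℤ) + (a : ℤ) - 1) = ((t.2 + a - 1 : ℕ) : ℤ) := by push_cast; omega
  have h2 : (((t.2 + a - 1 : ℕ) : ℤ) % ((b : ℕ) : ℤ)).toNat = (t.2 + a - 1) % b := by
    rw [← Int.natCast_mod, Int.toNat_natCast]
  rw [h1, h2]

lemma dlt_eval (P : NewtonPolygon) (t : Symb) (a : ℕ) (hm : P.m t.1 = a) :
    P.dlt t = if t.2 ≤ a then 1 else 0 := by
  unfold NewtonPolygon.dlt; rw [hm]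

end S15

namespace S15
namespace Ctx

variable (c : Ctx)

def gX (t : Symb) : Symb := c.ξ.pinv (c.w t)
def gC (t : Symb) : Symb := c.ξC.pinv (c.w t)
def eX (t : Symb) (k : ℕ) : ℕ := c.ξ.dlt ((c.gX)^[k+1] t)
def eC (t : Symb) (k : ℕ) : ℕ := c.ξC.dlt ((c.gC)^[k+1] t)
def SC (t : Symb) (k : ℕ) : ℕ := ∑ j ∈ Finset.range k, c.eC t j
def BB (t : Symb) (k : ℕ) : ℕ := k + c.SC t k

lemma stepA (t : Symb) (ht : c.VC t)
    (hA : (c.w t).2 + c.Mv (c.w t).1 ≤ c.Nv (c.w t).1) :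
    c.gX t = c.gC t ∧ c.VC (c.gC t) ∧ c.ξC.dlt (c.gC t) = 0 ∧ c.ξ.dlt (c.gX t) = 0 := by
  have hs := c.vc_w t ht
  set s := c.w t with hsdef
  obtain ⟨hr, h1, h2⟩ := hs
  have hgx : c.gX t = (s.1, (s.2 + c.Mv s.1 - 1) % (c.Mv s.1 + c.Nv s.1) + 1) :=
    pinv_eval c.ξ s _ _ (c.m_eval s.1 hr) (c.h_eval s.1 hr)
      (by have := c.N1 s.1; omega) h1
  have hgc : c.gC t = (s.1, (s.2 + c.Mv s.1 - 1) % (c.Nv s.1) + 1) :=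
    pinv_eval c.ξC s _ _ (c.mC_eval s.1 hr) (c.hC_eval s.1 hr) (by have := c.N1 s.1; omega) h1
  have hmod1 : (s.2 + c.Mv s.1 - 1) % (c.Mv s.1 + c.Nv s.1) = s.2 + c.Mv s.1 - 1 :=
    Nat.mod_eq_of_lt (by omega)
  have hmod2 : (s.2 + c.Mv s.1 - 1) % (c.Nv s.1) = s.2 + c.Mv s.1 - 1 :=
    Nat.mod_eq_of_lt (by omega)
  have hidx : s.2 + c.Mv s.1 - 1 + 1 = s.2 + c.Mv s.1 := by omega
  rw [hmod1, hidx] at hgx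
  rw [hmod2, hidx] at hgc
  refine ⟨hgx.trans hgc.symm, ?_, ?_, ?_⟩
  · rw [hgc]; exact ⟨hr, by omega, by dsimp only; omega⟩
  · rw [hgc, dlt_eval c.ξC (s.1, s.2 + c.Mv s.1) (c.Mv s.1) (c.mC_eval s.1 hr)]
    simp only [if_neg (by omega : ¬ (s.2 + c.Mv s.1 ≤ c.Mv s.1))]
  · rw [hgx, dlt_eval c.ξ (s.1, s.2 + c.Mv s.1) (c.Mv s.1) (c.m_eval s.1 hr)]
    simp only [if_neg (by omega : ¬ (s.2 + c.Mv s.1 ≤ c.Mv s.1))]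

lemma stepB (t : Symb) (ht : c.VC t)
    (hB : c.Nv (c.w t).1 < (c.w t).2 + c.Mv (c.w t).1) :
    c.VC (c.gC t) ∧ c.ξC.dlt (c.gC t) = 1 ∧ c.EX (c.gX t) ∧ c.ξ.dlt (c.gX t) = 0 ∧
      c.gX (c.gX t) = c.gC t ∧ c.ξ.dlt (c.gC t) = 1 := by
  have hs := c.vc_w t ht
  set s := c.w t with hsdef
  obtain ⟨hr, h1, h2⟩ := hs
  have hN := c.N1 s.1
  have hMN := c.MN s.1
  have hgx : c.gX t = (s.1, (s.2 + c.Mv s.1 - 1) % (c.Mv s.1 + c.Nv s.1) + 1) :=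
    pinv_eval c.ξ s _ _ (c.m_eval s.1 hr) (c.h_eval s.1 hr) (by omega) h1
  have hgc : c.gC t = (s.1, (s.2 + c.Mv s.1 - 1) % (c.Nv s.1) + 1) :=
    pinv_eval c.ξC s _ _ (c.mC_eval s.1 hr) (c.hC_eval s.1 hr) (by omega) h1
  have hmod1 : (s.2 + c.Mv s.1 - 1) % (c.Mv s.1 + c.Nv s.1) = s.2 + c.Mv s.1 - 1 :=
    Nat.mod_eq_of_lt (by omega)
  have hmod2 : (s.2 + c.Mv s.1 - 1) % (c.Nv s.1) = s.2 + c.Mv s.1 - 1 - c.Nv s.1 := by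
    rw [Nat.mod_eq_sub_mod (by omega)]
    exact Nat.mod_eq_of_lt (by omega)
  rw [hmod1] at hgx
  rw [hmod2] at hgc
  have hgxv : c.gX t = (s.1, s.2 + c.Mv s.1) := by rw [hgx]; congr 1; omega
  have hgcv : c.gC t = (s.1, s.2 + c.Mv s.1 - c.Nv s.1) := by rw [hgc]; congr 1; omega
  have hEX : c.EX (c.gX t) := by rw [hgxv]; exact ⟨hr, by dsimp only; omega, by dsimp only; omega⟩
  have hwfix : c.w (c.gX t) = c.gX t := c.ex_w _ hEX
  have hgx2 : c.gX (c.gX t) = c.gC t := by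
    rw [show c.gX (c.gX t) = c.ξ.pinv (c.w (c.gX t)) from rfl, hwfix, hgxv, hgcv]
    rw [pinv_eval c.ξ (s.1, s.2 + c.Mv s.1) (c.Mv s.1) (c.Mv s.1 + c.Nv s.1)
      (c.m_eval _ hr) (c.h_eval _ hr) (by omega) (by dsimp only; omega)]
    simp only [Prod.mk.injEq, true_and]
    have : (s.2 + c.Mv s.1 + c.Mv s.1 - 1) % (c.Mv s.1 + c.Nv s.1)
        = s.2 + c.Mv s.1 + c.Mv s.1 - 1 - (c.Mv s.1 + c.Nv s.1) := by
      rw [Nat.mod_eq_sub_mod (by omega)]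
      exact Nat.mod_eq_of_lt (by omega)
    rw [this]
    omega
  refine ⟨?_, ?_, hEX, ?_, hgx2, ?_⟩
  · rw [hgcv]; exact ⟨hr, by dsimp only; omega, by dsimp only; omega⟩
  · rw [hgcv, dlt_eval c.ξC (s.1, s.2 + c.Mv s.1 - c.Nv s.1) (c.Mv s.1) (c.mC_eval _ hr)]
    simp only [if_pos (by omega : s.2 + c.Mv s.1 - c.Nv s.1 ≤ c.Mv s.1)]
  · rw [hgxv, dlt_eval c.ξ (s.1, s.2 + c.Mv s.1) (c.Mv s.1) (c.m_eval _ hr)]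
    simp only [if_neg (by omega : ¬ (s.2 + c.Mv s.1 ≤ c.Mv s.1))]
  · rw [hgcv, dlt_eval c.ξ (s.1, s.2 + c.Mv s.1 - c.Nv s.1) (c.Mv s.1) (c.m_eval _ hr)]
    simp only [if_pos (by omega : s.2 + c.Mv s.1 - c.Nv s.1 ≤ c.Mv s.1)]

lemma stepE (t : Symb) (ht : c.EX t) :
    c.VC (c.gX t) ∧ c.ξ.dlt (c.gX t) = 1 := by
  obtain ⟨hr, h1, h2⟩ := ht
  have hN := c.N1 t.1
  have hMN := c.MN t.1
  have hwfix : c.w t = t := c.ex_w t ⟨hr, h1, h2⟩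
  have hgx : c.gX t = (t.1, (t.2 + c.Mv t.1 - 1) % (c.Mv t.1 + c.Nv t.1) + 1) := by
    rw [show c.gX t = c.ξ.pinv (c.w t) from rfl, hwfix]
    exact pinv_eval c.ξ t _ _ (c.m_eval t.1 hr) (c.h_eval t.1 hr) (by omega) (by omega)
  have hmod : (t.2 + c.Mv t.1 - 1) % (c.Mv t.1 + c.Nv t.1)
      = t.2 + c.Mv t.1 - 1 - (c.Mv t.1 + c.Nv t.1) := by
    rw [Nat.mod_eq_sub_mod (by omega)]
    exact Nat.mod_eq_of_lt (by omega)
  rw [hmod] at hgx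
  constructor
  · rw [hgx]; exact ⟨hr, by dsimp only; omega, by dsimp only; omega⟩
  · rw [hgx, dlt_eval c.ξ (t.1, t.2 + c.Mv t.1 - 1 - (c.Mv t.1 + c.Nv t.1) + 1) (c.Mv t.1) (c.m_eval t.1 hr)]
    simp only [if_pos (by omega : t.2 + c.Mv t.1 - 1 - (c.Mv t.1 + c.Nv t.1) + 1 ≤ c.Mv t.1)]

end Ctx
end S15

namespace S15
namespace Ctx

variable (c : Ctx)

lemma dlt_le_one (P : NewtonPolygon) (t : Symb) : P.dlt t ≤ 1 := by
  unfold NewtonPolygon.dlt; split <;> omega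

lemma eX_le_one (t : Symb) (k : ℕ) : c.eX t k ≤ 1 := dlt_le_one _ _
lemma eC_le_one (t : Symb) (k : ℕ) : c.eC t k ≤ 1 := dlt_le_one _ _

lemma BB_zero (t : Symb) : c.BB t 0 = 0 := by simp [BB, SC]

lemma BB_succ (t : Symb) (k : ℕ) : c.BB t (k+1) = c.BB t k + 1 + c.eC t k := by
  unfold BB SC
  rw [Finset.sum_range_succ]
  omega

lemma BB_mono (t : Symb) {a b : ℕ} (h : a ≤ b) : c.BB t a ≤ c.BB t b := by
  induction b with
  | zero =>
    have ha : a = 0 := by omega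
    subst ha; exact le_rfl
  | succ b ih =>
    rcases Nat.eq_or_lt_of_le h with rfl | hlt
    · exact le_rfl
    · have h1 := ih (by omega)
      have h2 := c.BB_succ t b
      omega

lemma eC_succ_traj (t : Symb) (k : ℕ) : c.eC t k = c.ξC.dlt (c.gC ((c.gC)^[k] t)) := by
  unfold eC; rw [Function.iterate_succ_apply']

/-- main block invariant -/
lemma block (t : Symb) (ht : c.VC t) (k : ℕ) :
    (c.gX)^[c.BB t k] t = (c.gC)^[k] t ∧ c.VC ((c.gC)^[k] t) := by
  induction k with
  | zero => rw [c.BB_zero]; exact ⟨rfl, ht⟩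
  | succ k ih =>
    obtain ⟨hit, hvc⟩ := ih
    set y := (c.gC)^[k] t with hy
    have heC : c.eC t k = c.ξC.dlt (c.gC y) := c.eC_succ_traj t k
    by_cases hA : (c.w y).2 + c.Mv (c.w y).1 ≤ c.Nv (c.w y).1
    · obtain ⟨hgg, hvc', hd0, _⟩ := c.stepA y hvc hA
      have he0 : c.eC t k = 0 := by rw [heC, hd0]
      have hB1 : c.BB t (k+1) = c.BB t k + 1 := by rw [c.BB_succ, he0]
      constructor
      · rw [hB1, Function.iterate_succ_apply', hit, Function.iterate_succ_apply', hgg]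
      · rw [Function.iterate_succ_apply']; exact hvc'
    · obtain ⟨hvc', hd1, hex, hd0, hgg, _⟩ := c.stepB y hvc (by omega)
      have he1 : c.eC t k = 1 := by rw [heC, hd1]
      have hB2 : c.BB t (k+1) = c.BB t k + 2 := by rw [c.BB_succ, he1]
      constructor
      · rw [hB2, show c.BB t k + 2 = (c.BB t k + 1) + 1 by omega,
          Function.iterate_succ_apply', Function.iterate_succ_apply', hit,
          Function.iterate_succ_apply', hgg]
      · rw [Function.iterate_succ_apply']; exact hvc'

lemma digit_first (t : Symb) (ht : c.VC t) (k : ℕ) : c.eX t (c.BB t k) = 0 := by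
  obtain ⟨hit, hvc⟩ := c.block t ht k
  have : c.eX t (c.BB t k) = c.ξ.dlt (c.gX ((c.gC)^[k] t)) := by
    unfold eX; rw [Function.iterate_succ_apply', hit]
  rw [this]
  by_cases hA : (c.w ((c.gC)^[k] t)).2 + c.Mv (c.w ((c.gC)^[k] t)).1
      ≤ c.Nv (c.w ((c.gC)^[k] t)).1
  · exact (c.stepA _ hvc hA).2.2.2
  · exact (c.stepB _ hvc (by omega)).2.2.2.1

lemma digit_one (t : Symb) (ht : c.VC t) (k : ℕ) (h1 : c.eC t k = 1) :
    c.eX t (c.BB t k + 1) = 1 := by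
  obtain ⟨hit, hvc⟩ := c.block t ht k
  set y := (c.gC)^[k] t with hy
  by_cases hA : (c.w y).2 + c.Mv (c.w y).1 ≤ c.Nv (c.w y).1
  · exfalso
    have := (c.stepA y hvc hA).2.2.1
    rw [c.eC_succ_traj, this] at h1
    omega
  · obtain ⟨hvc', hd1, hex, hd0, hgg, hdX1⟩ := c.stepB y hvc (by omega)
    have : c.eX t (c.BB t k + 1) = c.ξ.dlt ((c.gX) ((c.gX) y)) := by
      unfold eX
      rw [show c.BB t k + 1 + 1 = c.BB t k + 2 by omega,
        show c.BB t k + 2 = (c.BB t k + 1) + 1 by omega,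
        Function.iterate_succ_apply', Function.iterate_succ_apply', hit]
    rw [this, hgg, hdX1]

lemma cover (t : Symb) (K : ℕ) : ∃ k, c.BB t k ≤ K ∧ K < c.BB t (k+1) := by
  induction K with
  | zero => exact ⟨0, by rw [c.BB_zero], by rw [c.BB_succ, c.BB_zero]; omega⟩
  | succ K ih =>
    obtain ⟨k, h1, h2⟩ := ih
    rcases Nat.lt_or_ge (K+1) (c.BB t (k+1)) with h | h
    · exact ⟨k, by omega, h⟩
    · refine ⟨k+1, h, ?_⟩
      have := c.BB_succ t (k+1)
      omega

lemma classify (t : Symb) (ht : c.VC t) (K k : ℕ) (h1 : c.BB t k ≤ K)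
    (h2 : K < c.BB t (k+1)) :
    (K = c.BB t k ∧ c.eX t K = 0) ∨
      (K = c.BB t k + 1 ∧ c.eC t k = 1 ∧ c.eX t K = 1) := by
  have hs := c.BB_succ t k
  have he := c.eC_le_one t k
  rcases Nat.lt_or_ge (c.BB t k) K with h | h
  · right
    have hK : K = c.BB t k + 1 := by omega
    have he1 : c.eC t k = 1 := by omega
    exact ⟨hK, he1, by rw [hK]; exact c.digit_one t ht k he1⟩
  · left
    have hK : K = c.BB t k := by omega
    exact ⟨hK, by rw [hK]; exact c.digit_first t ht k⟩

end Ctx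
end S15

namespace S15
namespace Ctx

variable (c : Ctx)

lemma BB_congr (t t' : Symb) (p k : ℕ) (hk : k ≤ p)
    (hpre : ∀ j < p, c.eC t j = c.eC t' j) : c.BB t k = c.BB t' k := by
  unfold BB SC
  congr 1
  exact Finset.sum_congr rfl (fun j hj => hpre j (by
    have := Finset.mem_range.1 hj; omega))

lemma eX_congr (t t' : Symb) (ht : c.VC t) (ht' : c.VC t')
    (h : ∀ k, c.eC t k = c.eC t' k) (K : ℕ) : c.eX t K = c.eX t' K := by
  obtain ⟨k, h1, h2⟩ := c.cover t K
  have hBB : ∀ j, c.BB t j = c.BB t' j := fun j =>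
    c.BB_congr t t' (j+1) j (by omega) (fun i _ => h i)
  rcases c.classify t ht K k h1 h2 with ⟨hK, he⟩ | ⟨hK, he1, he⟩
  · rw [he, hK, hBB k]
    exact (c.digit_first t' ht' k).symm
  · rw [he, hK, hBB k]
    exact (c.digit_one t' ht' k (by rw [← h k]; exact he1)).symm

lemma eX_lex (t t' : Symb) (ht : c.VC t) (ht' : c.VC t') (p : ℕ)
    (hpre : ∀ k < p, c.eC t k = c.eC t' k) (h0 : c.eC t p = 0) (h1 : c.eC t' p = 1) :
    (∀ K < c.BB t p + 1, c.eX t K = c.eX t' K) ∧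
      c.eX t (c.BB t p + 1) = 0 ∧ c.eX t' (c.BB t p + 1) = 1 := by
  have hBB : ∀ j ≤ p, c.BB t j = c.BB t' j := fun j hj => c.BB_congr t t' p j hj hpre
  refine ⟨?_, ?_, ?_⟩
  · intro K hK
    obtain ⟨k, hk1, hk2⟩ := c.cover t K
    have hkp : k ≤ p := by
      by_contra hgt
      have : c.BB t (p+1) ≤ c.BB t k := c.BB_mono t (by omega)
      have hBs : c.BB t (p+1) = c.BB t p + 1 := by rw [c.BB_succ, h0]
      omega
    rcases Nat.eq_or_lt_of_le hkp with heq | hklt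
    · -- k = p : interval is just {BB t p} since eC t p = 0
      rw [heq] at hk1 hk2
      have hBs : c.BB t (p+1) = c.BB t p + 1 := by rw [c.BB_succ, h0]
      have hKeq : K = c.BB t p := by omega
      rw [hKeq, c.digit_first t ht p, hBB p le_rfl]
      exact (c.digit_first t' ht' p).symm
    · rcases c.classify t ht K k hk1 hk2 with ⟨hK', he⟩ | ⟨hK', he1, he⟩
      · rw [he, hK', hBB k (by omega)]
        exact (c.digit_first t' ht' k).symm
      · rw [he, hK', hBB k (by omega)]
        exact (c.digit_one t' ht' k (by rw [← hpre k hklt]; exact he1)).symm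
  · have hBs : c.BB t (p+1) = c.BB t p + 1 := by rw [c.BB_succ, h0]
    rw [← hBs]
    exact c.digit_first t ht (p+1)
  · rw [hBB p le_rfl]
    exact c.digit_one t' ht' p h1

end Ctx
end S15

namespace S15
namespace Ctx

variable (c : Ctx)

def Valid (t : Symb) : Prop :=
  (t.1 = 1 ∨ t.1 = 2) ∧ 1 ≤ t.2 ∧ t.2 ≤ c.Mv t.1 + c.Nv t.1

lemma valid_iff (t : Symb) : c.Valid t ↔ (c.VC t ∨ c.EX t) := by
  unfold Valid VC EX
  constructor
  · rintro ⟨hr, h1, h2⟩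
    rcases le_or_gt t.2 (c.Nv t.1) with h | h
    · exact Or.inl ⟨hr, h1, h⟩
    · exact Or.inr ⟨hr, h, h2⟩
  · rintro (⟨hr, h1, h2⟩ | ⟨hr, h1, h2⟩)
    · exact ⟨hr, h1, by omega⟩
    · exact ⟨hr, by omega, h2⟩

def VFX : Finset Symb :=
  ((Finset.Icc 1 2) ×ˢ (Finset.Icc 1 (c.m1 + c.n1 + c.m2 + c.n2))).filter
    (fun t => (t.1 = 1 ∨ t.1 = 2) ∧ 1 ≤ t.2 ∧ t.2 ≤ c.Mv t.1 + c.Nv t.1)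

lemma mem_VFX (t : Symb) : t ∈ c.VFX ↔ c.Valid t := by
  unfold VFX Valid
  rw [Finset.mem_filter, Finset.mem_product, Finset.mem_Icc, Finset.mem_Icc]
  constructor
  · rintro ⟨_, h⟩; exact h
  · rintro ⟨hr, h1, h2⟩
    refine ⟨⟨⟨by omega, by omega⟩, ⟨by omega, ?_⟩⟩, hr, h1, h2⟩
    have := c.MN t.1
    rcases hr with h | h <;> simp [Mv, Nv, h] at h2 ⊢ <;> omega

def VFC : Finset Symb :=
  ((Finset.Icc 1 2) ×ˢ (Finset.Icc 1 (c.n1 + c.n2))).filter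
    (fun t => (t.1 = 1 ∨ t.1 = 2) ∧ 1 ≤ t.2 ∧ t.2 ≤ c.Nv t.1)

lemma mem_VFC (t : Symb) : t ∈ c.VFC ↔ c.VC t := by
  unfold VFC VC
  rw [Finset.mem_filter, Finset.mem_product, Finset.mem_Icc, Finset.mem_Icc]
  constructor
  · rintro ⟨_, h⟩; exact h
  · rintro ⟨hr, h1, h2⟩
    refine ⟨⟨⟨by omega, by omega⟩, ⟨by omega, ?_⟩⟩, hr, h1, h2⟩
    rcases hr with h | h <;> simp [Nv, h] at h2 ⊢ <;> omega

lemma valid_w (t : Symb) (ht : c.Valid t) : c.Valid (c.w t) := by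
  rcases (c.valid_iff t).1 ht with h | h
  · exact (c.valid_iff _).2 (Or.inl (c.vc_w t h))
  · rw [c.ex_w t h]; exact ht

lemma gX_maps (t : Symb) (ht : c.Valid t) : c.Valid (c.gX t) := by
  rw [valid_iff]
  rcases (c.valid_iff t).1 ht with h | h
  · by_cases hA : (c.w t).2 + c.Mv (c.w t).1 ≤ c.Nv (c.w t).1
    · exact Or.inl (by rw [(c.stepA t h hA).1]; exact (c.stepA t h hA).2.1)
    · exact Or.inr (c.stepB t h (by omega)).2.2.1
  · exact Or.inl (c.stepE t h).1

lemma gC_maps (t : Symb) (ht : c.VC t) : c.VC (c.gC t) := by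
  by_cases hA : (c.w t).2 + c.Mv (c.w t).1 ≤ c.Nv (c.w t).1
  · exact (c.stepA t ht hA).2.1
  · exact (c.stepB t ht (by omega)).1

lemma pinv_inj (P : NewtonPolygon) (s s' : Symb) (M H : ℕ)
    (hm : P.m s.1 = M) (hh : P.h s.1 = H) (hm' : P.m s'.1 = M) (hh' : P.h s'.1 = H)
    (hH : 0 < H) (h1 : 1 ≤ s.2) (h2 : s.2 ≤ H) (h1' : 1 ≤ s'.2) (h2' : s'.2 ≤ H)
    (hfst : s.1 = s'.1) (heq : P.pinv s = P.pinv s') : s = s' := by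
  rw [pinv_eval P s M H hm hh hH h1, pinv_eval P s' M H hm' hh' hH h1'] at heq
  have hsnd : (s.2 + M - 1) % H = (s'.2 + M - 1) % H := by
    have := congrArg Prod.snd heq
    dsimp at this
    omega
  have : s.2 + M - 1 = s'.2 + M - 1 := by
    rcases Nat.le_total (s.2 + M - 1) (s'.2 + M - 1) with h | h
    · exact mod_inj_aux hsnd h (by omega)
    · exact (mod_inj_aux hsnd.symm h (by omega)).symm
  have : s.2 = s'.2 := by omega
  exact Prod.ext hfst this

lemma gX_inj (t t' : Symb) (ht : c.Valid t) (ht' : c.Valid t')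
    (heq : c.gX t = c.gX t') : t = t' := by
  have hs := c.valid_w t ht
  have hs' := c.valid_w t' ht'
  obtain ⟨hr, h1, h2⟩ := hs
  obtain ⟨hr', h1', h2'⟩ := hs'
  have hfst : (c.w t).1 = (c.w t').1 := by
    have := congrArg Prod.fst heq
    unfold gX NewtonPolygon.pinv at this
    simpa using this
  apply c.hwinj
  refine pinv_inj c.ξ (c.w t) (c.w t') (c.Mv (c.w t).1) (c.Mv (c.w t).1 + c.Nv (c.w t).1)
    (c.m_eval _ hr) (c.h_eval _ hr) ?_ ?_ (by have := c.N1 (c.w t).1; omega)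
    h1 h2 (by omega) (by rw [hfst]; omega) hfst heq
  · rw [hfst]; exact c.m_eval _ hr'
  · rw [hfst]; exact c.h_eval _ hr'

lemma gC_inj (t t' : Symb) (ht : c.VC t) (ht' : c.VC t')
    (heq : c.gC t = c.gC t') : t = t' := by
  have hs := c.vc_w t ht
  have hs' := c.vc_w t' ht'
  obtain ⟨hr, h1, h2⟩ := hs
  obtain ⟨hr', h1', h2'⟩ := hs'
  have hfst : (c.w t).1 = (c.w t').1 := by
    have := congrArg Prod.fst heq
    unfold gC NewtonPolygon.pinv at this
    simpa using this
  apply c.hwinj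
  refine pinv_inj c.ξC (c.w t) (c.w t') (c.Mv (c.w t).1) (c.Nv (c.w t).1)
    (c.mC_eval _ hr) (c.hC_eval _ hr) ?_ ?_ (c.N1 _) h1 h2 (by omega)
    (by rw [hfst]; omega) hfst heq
  · rw [hfst]; exact c.mC_eval _ hr'
  · rw [hfst]; exact c.hC_eval _ hr'

lemma periodX (t : Symb) (ht : c.Valid t) :
    ∃ P, 0 < P ∧ ∀ K, c.eX t (K + P) = c.eX t K := by
  obtain ⟨P, hP, hper⟩ := exists_period c.VFX c.gX
    (fun s hs => (c.mem_VFX _).2 (c.gX_maps s ((c.mem_VFX _).1 hs)))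
    (fun s hs s' hs' h => c.gX_inj s s' ((c.mem_VFX _).1 hs) ((c.mem_VFX _).1 hs') h)
    ((c.mem_VFX t).2 ht)
  refine ⟨P, hP, fun K => ?_⟩
  unfold eX
  rw [show K + P + 1 = (K + 1) + P by omega, hper (K+1)]

lemma periodC (t : Symb) (ht : c.VC t) :
    ∃ P, 0 < P ∧ ∀ K, c.eC t (K + P) = c.eC t K := by
  obtain ⟨P, hP, hper⟩ := exists_period c.VFC c.gC
    (fun s hs => (c.mem_VFC _).2 (c.gC_maps s ((c.mem_VFC _).1 hs)))
    (fun s hs s' hs' h => c.gC_inj s s' ((c.mem_VFC _).1 hs) ((c.mem_VFC _).1 hs') h)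
    ((c.mem_VFC t).2 ht)
  refine ⟨P, hP, fun K => ?_⟩
  unfold eC
  rw [show K + P + 1 = (K + 1) + P by omega, hper (K+1)]

noncomputable def bX (t : Symb) : ℝ := sval (c.eX t)
noncomputable def bC (t : Symb) : ℝ := sval (c.eC t)

lemma sync_lt (t t' : Symb) (ht : c.VC t) (ht' : c.VC t') (p : ℕ)
    (hpre : ∀ k < p, c.eC t k = c.eC t' k) (h0 : c.eC t p = 0) (h1 : c.eC t' p = 1) :
    c.bC t < c.bC t' ∧ c.bX t < c.bX t' := by
  obtain ⟨P, hP, hper⟩ := c.periodC t' ht'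
  obtain ⟨PX, hPX, hperX⟩ := c.periodX t' ((c.valid_iff t').2 (Or.inl ht'))
  obtain ⟨hpre', hd0, hd1⟩ := c.eX_lex t t' ht ht' p hpre h0 h1
  constructor
  · exact sval_lt _ _ (c.eC_le_one t) (c.eC_le_one t') p (p + P) (by omega) hpre h0 h1
      (by rw [hper p]; exact h1)
  · exact sval_lt _ _ (c.eX_le_one t) (c.eX_le_one t') (c.BB t p + 1) (c.BB t p + 1 + PX)
      (by omega) hpre' hd0 hd1 (by rw [hperX (c.BB t p + 1)]; exact hd1)

lemma sync (t t' : Symb) (ht : c.VC t) (ht' : c.VC t') :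
    (c.bC t = c.bC t' ∧ c.bX t = c.bX t') ∨
      (c.bC t < c.bC t' ∧ c.bX t < c.bX t') ∨
      (c.bC t' < c.bC t ∧ c.bX t' < c.bX t) := by
  by_cases h : ∀ k, c.eC t k = c.eC t' k
  · left
    exact ⟨sval_congr _ _ h, sval_congr _ _ (c.eX_congr t t' ht ht' h)⟩
  · obtain ⟨p, hpre, hne⟩ := seq_first_diff _ _ h
    have h1 := c.eC_le_one t p
    have h2 := c.eC_le_one t' p
    rcases (by omega : (c.eC t p = 0 ∧ c.eC t' p = 1) ∨ (c.eC t p = 1 ∧ c.eC t' p = 0))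
      with ⟨ha, hb⟩ | ⟨ha, hb⟩
    · exact Or.inr (Or.inl (c.sync_lt t t' ht ht' p hpre ha hb))
    · exact Or.inr (Or.inr (c.sync_lt t' t ht' ht p
        (fun k hk => (hpre k hk).symm) hb ha))

lemma cmp_lt (t t' : Symb) (ht : c.VC t) (ht' : c.VC t') :
    c.bC t < c.bC t' ↔ c.bX t < c.bX t' := by
  rcases c.sync t t' ht ht' with ⟨h1, h2⟩ | ⟨h1, h2⟩ | ⟨h1, h2⟩ <;>
    constructor <;> intro h <;> linarith

lemma cmp_eq (t t' : Symb) (ht : c.VC t) (ht' : c.VC t') :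
    c.bC t = c.bC t' ↔ c.bX t = c.bX t' := by
  rcases c.sync t t' ht ht' with ⟨h1, h2⟩ | ⟨h1, h2⟩ | ⟨h1, h2⟩ <;>
    constructor <;> intro h <;> linarith

lemma cmp_le (t t' : Symb) (ht : c.VC t) (ht' : c.VC t') :
    c.bC t ≤ c.bC t' ↔ c.bX t ≤ c.bX t' := by
  rcases c.sync t t' ht ht' with ⟨h1, h2⟩ | ⟨h1, h2⟩ | ⟨h1, h2⟩ <;>
    constructor <;> intro h <;> linarith

lemma vc_first_digit (t : Symb) (ht : c.VC t) : c.eX t 0 = 0 := by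
  have := c.digit_first t ht 0
  rwa [c.BB_zero] at this

lemma ex_first_digit (t : Symb) (ht : c.EX t) : c.eX t 0 = 1 := by
  unfold eX
  rw [Function.iterate_one]
  exact (c.stepE t ht).2

lemma vc_lt_extra (t t' : Symb) (ht : c.VC t) (ht' : c.EX t') : c.bX t < c.bX t' := by
  obtain ⟨P, hP, hper⟩ := c.periodX t' ((c.valid_iff t').2 (Or.inr ht'))
  exact sval_lt _ _ (c.eX_le_one t) (c.eX_le_one t') 0 P hP (by omega)
    (c.vc_first_digit t ht) (c.ex_first_digit t' ht')
    (by rw [show P = 0 + P by omega, hper 0]; exact c.ex_first_digit t' ht')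

end Ctx
end S15

namespace S15
namespace Ctx

variable (c : Ctx)

lemma mem_TfinX (t : Symb) : t ∈ c.ξ.Tfin ↔ c.Valid t := by
  unfold NewtonPolygon.Tfin
  rw [Finset.mem_filter, Finset.mem_product, Finset.mem_Icc, Finset.mem_Icc]
  have hz : c.ξ.z = 2 := by simp [NewtonPolygon.z, c.hseg]
  have hfold : c.ξ.seg.foldr (fun p s => p.1 + p.2 + s) 0
      = c.m1 + c.n1 + (c.m2 + c.n2 + 0) := by rw [c.hseg]; rfl
  rw [hz, hfold]
  unfold Valid
  constructor
  · rintro ⟨⟨⟨ha, hb⟩, hc', hd⟩, he⟩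
    have hr : t.1 = 1 ∨ t.1 = 2 := by omega
    rw [c.h_eval t.1 hr] at he
    exact ⟨hr, hc', he⟩
  · rintro ⟨hr, h1, h2⟩
    have hb := c.h_eval t.1 hr
    refine ⟨⟨⟨by omega, by omega⟩, h1, ?_⟩, by omega⟩
    rcases hr with h | h <;> simp [Mv, Nv, h] at h2 <;> omega

lemma mem_TfinC (t : Symb) : t ∈ c.ξC.Tfin ↔ c.VC t := by
  unfold NewtonPolygon.Tfin
  rw [Finset.mem_filter, Finset.mem_product, Finset.mem_Icc, Finset.mem_Icc]
  have hz : c.ξC.z = 2 := by simp [NewtonPolygon.z, c.hsegC]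
  have hfold : c.ξC.seg.foldr (fun p s => p.1 + p.2 + s) 0
      = c.m1 + (c.n1 - c.m1) + (c.m2 + (c.n2 - c.m2) + 0) := by rw [c.hsegC]; rfl
  rw [hz, hfold]
  unfold VC
  have hmn1 := c.hm1
  have hmn2 := c.hm2
  constructor
  · rintro ⟨⟨⟨ha, hb⟩, hc', hd⟩, he⟩
    have hr : t.1 = 1 ∨ t.1 = 2 := by omega
    rw [c.hC_eval t.1 hr] at he
    exact ⟨hr, hc', he⟩
  · rintro ⟨hr, h1, h2⟩
    have hb := c.hC_eval t.1 hr
    refine ⟨⟨⟨by omega, by omega⟩, h1, ?_⟩, by omega⟩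
    rcases hr with h | h <;> simp [Nv, h] at h2 <;> omega

lemma dlt_agree (t : Symb) (ht : c.VC t) : c.ξ.dlt t = c.ξC.dlt t := by
  rw [dlt_eval c.ξ t (c.Mv t.1) (c.m_eval t.1 ht.1),
    dlt_eval c.ξC t (c.Mv t.1) (c.mC_eval t.1 ht.1)]

lemma dlt_extra (t : Symb) (ht : c.EX t) : c.ξ.dlt t = 0 := by
  rw [dlt_eval c.ξ t (c.Mv t.1) (c.m_eval t.1 ht.1)]
  have h1 := c.MN t.1
  have h2 := ht.2.1
  rw [if_neg (by omega)]

lemma dlt_one_vc (t : Symb) (ht : c.Valid t) (h1 : c.ξ.dlt t = 1) : c.VC t := by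
  rcases (c.valid_iff t).1 ht with h | h
  · exact h
  · rw [c.dlt_extra t h] at h1; omega

/-- bridges -/
lemma bmod_eq_bX (u v : Symb) (hw : ∀ s, c.w s = Equiv.swap u v s) (t : Symb) :
    c.ξ.bmod u v t = c.bX t := by
  have hfe : c.ξ.pmodInv u v = c.gX := by
    funext s
    unfold NewtonPolygon.pmodInv gX
    rw [hw]
  unfold NewtonPolygon.bmod bX sval eX
  rw [hfe]

lemma bmodC_eq_bC (u v : Symb) (hw : ∀ s, c.w s = Equiv.swap u v s) (t : Symb) :
    c.ξC.bmod u v t = c.bC t := by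
  have hfe : c.ξC.pmodInv u v = c.gC := by
    funext s
    unfold NewtonPolygon.pmodInv gC
    rw [hw]
  unfold NewtonPolygon.bmod bC sval eC
  rw [hfe]

lemma bexp_eq_bX (hw : ∀ s, c.w s = s) (t : Symb) : c.ξ.bexp t = c.bX t := by
  have hfe : c.ξ.pinv = c.gX := by
    funext s
    unfold gX
    rw [hw]
  unfold NewtonPolygon.bexp bX sval eX
  rw [hfe]

lemma bexpC_eq_bC (hw : ∀ s, c.w s = s) (t : Symb) : c.ξC.bexp t = c.bC t := by
  have hfe : c.ξC.pinv = c.gC := by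
    funext s
    unfold gC
    rw [hw]
  unfold NewtonPolygon.bexp bC sval eC
  rw [hfe]

end Ctx
end S15

namespace S15
namespace Ctx

variable (c : Ctx)

lemma slt_transfer (hw : ∀ s, c.w s = s) (t t' : Symb) (ht : c.VC t) (ht' : c.VC t') :
    c.ξ.slt t t' ↔ c.ξC.slt t t' := by
  unfold NewtonPolygon.slt
  rw [c.bexp_eq_bX hw, c.bexp_eq_bX hw, c.bexpC_eq_bC hw, c.bexpC_eq_bC hw]
  rw [c.cmp_lt t t' ht ht', c.cmp_eq t t' ht ht']

lemma not_slt_extra (hw : ∀ s, c.w s = s) (t t' : Symb) (ht : c.EX t) (ht' : c.VC t') :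
    ¬ c.ξ.slt t t' := by
  have hlt : c.bX t' < c.bX t := c.vc_lt_extra t' t ht' ht
  unfold NewtonPolygon.slt
  rw [c.bexp_eq_bX hw, c.bexp_eq_bX hw]
  rintro (h | ⟨h, _⟩) <;> linarith

lemma len_eq (hw : ∀ s, c.w s = s) : c.ξ.len = c.ξC.len := by
  unfold NewtonPolygon.len
  congr 1
  apply Finset.ext
  rintro ⟨t, t'⟩
  rw [Finset.mem_filter, Finset.mem_filter, Finset.mem_product, Finset.mem_product]
  simp only
  constructor
  · rintro ⟨⟨h1, h2⟩, hslt, hd0, hd1⟩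
    have hv' := (c.mem_TfinX t').1 h2
    have hVC' : c.VC t' := c.dlt_one_vc t' hv' hd1
    have hVC : c.VC t := by
      rcases (c.valid_iff t).1 ((c.mem_TfinX t).1 h1) with h | h
      · exact h
      · exact absurd hslt (c.not_slt_extra hw t t' h hVC')
    refine ⟨⟨(c.mem_TfinC t).2 hVC, (c.mem_TfinC t').2 hVC'⟩,
      (c.slt_transfer hw t t' hVC hVC').1 hslt, ?_, ?_⟩
    · rw [← c.dlt_agree t hVC]; exact hd0
    · rw [← c.dlt_agree t' hVC']; exact hd1
  · rintro ⟨⟨h1, h2⟩, hslt, hd0, hd1⟩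
    have hVC := (c.mem_TfinC t).1 h1
    have hVC' := (c.mem_TfinC t').1 h2
    refine ⟨⟨(c.mem_TfinX t).2 ((c.valid_iff t).2 (Or.inl hVC)),
      (c.mem_TfinX t').2 ((c.valid_iff t').2 (Or.inl hVC'))⟩,
      (c.slt_transfer hw t t' hVC hVC').2 hslt, ?_, ?_⟩
    · rw [c.dlt_agree t hVC]; exact hd0
    · rw [c.dlt_agree t' hVC']; exact hd1

lemma spec_fwd (u v : Symb) (hw : ∀ s, c.w s = Equiv.swap u v s)
    (hlen : c.ξ.len = c.ξC.len) :
    c.ξ.ExGeneric u v → c.ξC.ExGeneric u v := by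
  rintro ⟨R, ⟨hirr, htrans, htot, hcomp⟩, hlenR⟩
  have hsub : ∀ t : Symb, t ∈ c.ξC.Tfin → t ∈ c.ξ.Tfin := fun t ht =>
    (c.mem_TfinX t).2 ((c.valid_iff t).2 (Or.inl ((c.mem_TfinC t).1 ht)))
  refine ⟨R, ⟨fun t ht => hirr t (hsub t ht),
    fun t ht t' ht' t'' ht'' => htrans t (hsub t ht) t' (hsub t' ht') t'' (hsub t'' ht''),
    fun t ht t' ht' => htot t (hsub t ht) t' (hsub t' ht'), ?_⟩, ?_⟩
  · intro t ht t' ht' hR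
    have hVC := (c.mem_TfinC t).1 ht
    have hVC' := (c.mem_TfinC t').1 ht'
    have := hcomp t (hsub t ht) t' (hsub t' ht') hR
    rw [c.bmod_eq_bX u v hw, c.bmod_eq_bX u v hw] at this
    rw [c.bmodC_eq_bC u v hw, c.bmodC_eq_bC u v hw]
    exact (c.cmp_le t t' hVC hVC').2 this
  · have hset : ((c.ξC.Tfin ×ˢ c.ξC.Tfin).filter
        (fun p => R p.1 p.2 ∧ c.ξC.dlt p.1 = 0 ∧ c.ξC.dlt p.2 = 1))
        = ((c.ξ.Tfin ×ˢ c.ξ.Tfin).filter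
        (fun p => R p.1 p.2 ∧ c.ξ.dlt p.1 = 0 ∧ c.ξ.dlt p.2 = 1)) := by
      apply Finset.ext
      rintro ⟨t, t'⟩
      rw [Finset.mem_filter, Finset.mem_filter, Finset.mem_product, Finset.mem_product]
      simp only
      constructor
      · rintro ⟨⟨h1, h2⟩, hR, hd0, hd1⟩
        have hVC := (c.mem_TfinC t).1 h1
        have hVC' := (c.mem_TfinC t').1 h2
        exact ⟨⟨hsub t h1, hsub t' h2⟩, hR, by rw [c.dlt_agree t hVC]; exact hd0,
          by rw [c.dlt_agree t' hVC']; exact hd1⟩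
      · rintro ⟨⟨h1, h2⟩, hR, hd0, hd1⟩
        have hVC' : c.VC t' := c.dlt_one_vc t' ((c.mem_TfinX t').1 h2) hd1
        have hVC : c.VC t := by
          rcases (c.valid_iff t).1 ((c.mem_TfinX t).1 h1) with h | h
          · exact h
          · exfalso
            have hle := hcomp t h1 t' h2 hR
            rw [c.bmod_eq_bX u v hw, c.bmod_eq_bX u v hw] at hle
            have := c.vc_lt_extra t' t hVC' h
            linarith
        exact ⟨⟨(c.mem_TfinC t).2 hVC, (c.mem_TfinC t').2 hVC'⟩, hR,
          by rw [← c.dlt_agree t hVC]; exact hd0,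
          by rw [← c.dlt_agree t' hVC']; exact hd1⟩
    unfold NewtonPolygon.lenR at hlenR ⊢
    rw [hset, hlenR, hlen]

end Ctx
end S15

namespace S15
namespace Ctx

variable (c : Ctx)

def extR (u v : Symb) (R : Symb → Symb → Prop) : Symb → Symb → Prop :=
  fun t t' => c.bX t < c.bX t' ∨ (c.bX t = c.bX t' ∧
    ((c.VC t ∧ c.VC t' ∧ R t t') ∨ (c.VC t ∧ ¬ c.VC t') ∨
     (¬ c.VC t ∧ ¬ c.VC t' ∧ (t.1 < t'.1 ∨ (t.1 = t'.1 ∧ t.2 < t'.2)))))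

lemma spec_bwd (u v : Symb) (hw : ∀ s, c.w s = Equiv.swap u v s)
    (hlen : c.ξ.len = c.ξC.len) :
    c.ξC.ExGeneric u v → c.ξ.ExGeneric u v := by
  rintro ⟨R, ⟨hirr, htrans, htot, hcomp⟩, hlenR⟩
  set R' := c.extR u v R with hR'def
  have hmemC : ∀ t : Symb, c.VC t → t ∈ c.ξC.Tfin := fun t h => (c.mem_TfinC t).2 h
  -- bC-compatibility of R
  have hRle : ∀ t t', c.VC t → c.VC t' → R t t' → c.bC t ≤ c.bC t' := by
    intro t t' hv hv' hR
    have := hcomp t (hmemC t hv) t' (hmemC t' hv') hR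
    rwa [c.bmodC_eq_bC u v hw, c.bmodC_eq_bC u v hw] at this
  have hiff : ∀ t t', c.VC t → c.VC t' → (R' t t' ↔ R t t') := by
    intro t t' hv hv'
    constructor
    · rintro (hlt | ⟨heq, hcase⟩)
      · have hbC : c.bC t < c.bC t' := (c.cmp_lt t t' hv hv').2 hlt
        have hne : t ≠ t' := by
          rintro rfl; exact lt_irrefl _ hbC
        rcases htot t (hmemC t hv) t' (hmemC t' hv') hne with h | h
        · exact h
        · exact absurd (hRle t' t hv' hv h) (by linarith)
      · rcases hcase with ⟨_, _, hR⟩ | ⟨_, hn⟩ | ⟨hn, _, _⟩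
        · exact hR
        · exact absurd hv' hn
        · exact absurd hv hn
    · intro hR
      have hle : c.bX t ≤ c.bX t' := (c.cmp_le t t' hv hv').1 (hRle t t' hv hv' hR)
      rcases lt_or_eq_of_le hle with h | h
      · exact Or.inl h
      · exact Or.inr ⟨h, Or.inl ⟨hv, hv', hR⟩⟩
  refine ⟨R', ⟨?_, ?_, ?_, ?_⟩, ?_⟩
  · -- irrefl
    intro t ht
    rintro (hlt | ⟨_, hcase⟩)
    · exact lt_irrefl _ hlt
    · rcases hcase with ⟨hv, _, hR⟩ | ⟨hv, hn⟩ | ⟨_, _, hlex⟩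
      · exact hirr t (hmemC t hv) hR
      · exact hn hv
      · omega
  · -- trans
    intro t ht t' ht' t'' ht'' h12 h23
    rcases h12 with h | ⟨he, hc12⟩
    · rcases h23 with h' | ⟨he', _⟩
      · exact Or.inl (h.trans h')
      · exact Or.inl (he' ▸ h)
    · rcases h23 with h' | ⟨he', hc23⟩
      · exact Or.inl (he ▸ h')
      · refine Or.inr ⟨he.trans he', ?_⟩
        rcases hc12 with ⟨hv1, hv2, hR⟩ | ⟨hv1, hn2⟩ | ⟨hn1, hn2, hlex⟩
        · rcases hc23 with ⟨_, hv3, hR'⟩ | ⟨_, hn3⟩ | ⟨hn2', _, _⟩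
          · exact Or.inl ⟨hv1, hv3,
              htrans t (hmemC t hv1) t' (hmemC t' hv2) t'' (hmemC t'' hv3) hR hR'⟩
          · exact Or.inr (Or.inl ⟨hv1, hn3⟩)
          · exact absurd hv2 hn2'
        · rcases hc23 with ⟨hv2, _, _⟩ | ⟨hv2, _⟩ | ⟨_, hn3, _⟩
          · exact absurd hv2 hn2
          · exact absurd hv2 hn2
          · exact Or.inr (Or.inl ⟨hv1, hn3⟩)
        · rcases hc23 with ⟨hv2, _, _⟩ | ⟨hv2, _⟩ | ⟨_, hn3, hlex'⟩
          · exact absurd hv2 hn2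
          · exact absurd hv2 hn2
          · exact Or.inr (Or.inr ⟨hn1, hn3, by omega⟩)
  · -- total
    intro t ht t' ht' hne
    rcases lt_trichotomy (c.bX t) (c.bX t') with h | h | h
    · exact Or.inl (Or.inl h)
    · by_cases hv : c.VC t <;> by_cases hv' : c.VC t'
      · rcases htot t (hmemC t hv) t' (hmemC t' hv') hne with hR | hR
        · exact Or.inl (Or.inr ⟨h, Or.inl ⟨hv, hv', hR⟩⟩)
        · exact Or.inr (Or.inr ⟨h.symm, Or.inl ⟨hv', hv, hR⟩⟩)
      · exact Or.inl (Or.inr ⟨h, Or.inr (Or.inl ⟨hv, hv'⟩)⟩)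
      · exact Or.inr (Or.inr ⟨h.symm, Or.inr (Or.inl ⟨hv', hv⟩)⟩)
      · have hpne : t.1 ≠ t'.1 ∨ (t.1 = t'.1 ∧ t.2 ≠ t'.2) := by
          by_contra hcon
          push_neg at hcon
          exact hne (Prod.ext (by tauto) (by tauto))
        rcases Nat.lt_trichotomy t.1 t'.1 with h1 | h1 | h1
        · exact Or.inl (Or.inr ⟨h, Or.inr (Or.inr ⟨hv, hv', Or.inl h1⟩)⟩)
        · rcases Nat.lt_trichotomy t.2 t'.2 with h2 | h2 | h2
          · exact Or.inl (Or.inr ⟨h, Or.inr (Or.inr ⟨hv, hv', Or.inr ⟨h1, h2⟩⟩)⟩)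
          · exact absurd (Prod.ext h1 h2) hne
          · exact Or.inr (Or.inr ⟨h.symm, Or.inr (Or.inr ⟨hv', hv, Or.inr ⟨h1.symm, h2⟩⟩)⟩)
        · exact Or.inr (Or.inr ⟨h.symm, Or.inr (Or.inr ⟨hv', hv, Or.inl h1⟩)⟩)
    · exact Or.inr (Or.inl h)
  · -- compatibility
    intro t ht t' ht' hR
    rw [c.bmod_eq_bX u v hw, c.bmod_eq_bX u v hw]
    rcases hR with h | ⟨h, _⟩
    · exact le_of_lt h
    · exact le_of_eq h
  · -- length
    have hset : ((c.ξ.Tfin ×ˢ c.ξ.Tfin).filter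
        (fun p => R' p.1 p.2 ∧ c.ξ.dlt p.1 = 0 ∧ c.ξ.dlt p.2 = 1))
        = ((c.ξC.Tfin ×ˢ c.ξC.Tfin).filter
        (fun p => R p.1 p.2 ∧ c.ξC.dlt p.1 = 0 ∧ c.ξC.dlt p.2 = 1)) := by
      apply Finset.ext
      rintro ⟨t, t'⟩
      rw [Finset.mem_filter, Finset.mem_filter, Finset.mem_product, Finset.mem_product]
      simp only
      constructor
      · rintro ⟨⟨h1, h2⟩, hR, hd0, hd1⟩
        have hVC' : c.VC t' := c.dlt_one_vc t' ((c.mem_TfinX t').1 h2) hd1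
        have hVC : c.VC t := by
          rcases (c.valid_iff t).1 ((c.mem_TfinX t).1 h1) with h | h
          · exact h
          · exfalso
            have hgt := c.vc_lt_extra t' t hVC' h
            rcases hR with hlt | ⟨heq, _⟩ <;> linarith
        exact ⟨⟨hmemC t hVC, hmemC t' hVC'⟩, (hiff t t' hVC hVC').1 hR,
          by rw [← c.dlt_agree t hVC]; exact hd0,
          by rw [← c.dlt_agree t' hVC']; exact hd1⟩
      · rintro ⟨⟨h1, h2⟩, hR, hd0, hd1⟩
        have hVC := (c.mem_TfinC t).1 h1
        have hVC' := (c.mem_TfinC t').1 h2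
        exact ⟨⟨(c.mem_TfinX t).2 ((c.valid_iff t).2 (Or.inl hVC)),
          (c.mem_TfinX t').2 ((c.valid_iff t').2 (Or.inl hVC'))⟩,
          (hiff t t' hVC hVC').2 hR,
          by rw [c.dlt_agree t hVC]; exact hd0,
          by rw [c.dlt_agree t' hVC']; exact hd1⟩
    unfold NewtonPolygon.lenR at hlenR ⊢
    rw [hset, hlenR, hlen]

end Ctx
end S15



/-- for a two-segment Newton polygon `ξ = ((m1,n1),(m2,n2))` with
`n1·m2 > m1·n2` and `n2 ≥ m2`, its curtailment `ξ^C = ((m1,n1-m1),(m2,n2-m2))`, and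
`u = (1,i)`, `v = (2,j)` with `m1 < i ≤ n1`, `1 ≤ j ≤ m2` and `u < v` in `T(ξ)`:
there is a generic specialization of `S(ξ)` by `(u,v)` iff there is one of `S(ξ^C)`
by `(u,v)`. -/
theorem statement15 (ξ ξC : NewtonPolygon) (m1 n1 m2 n2 : ℕ)
    (hseg : ξ.seg = [(m1, n1), (m2, n2)])
    (hslope : m1 * n2 < n1 * m2) (h2 : m2 ≤ n2)
    (hsegC : ξC.seg = [(m1, n1 - m1), (m2, n2 - m2)])
    (i j : ℕ) (hi1 : m1 < i) (hi2 : i ≤ n1) (hj1 : 1 ≤ j) (hj2 : j ≤ m2)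
    (huv : ξ.slt (1, i) (2, j)) :
    ξ.ExGeneric (1, i) (2, j) ↔ ξC.ExGeneric (1, i) (2, j) := by
  have hn1 : 1 ≤ n1 := by omega
  have hm1n : m1 ≤ n1 := by omega
  have hn2 : 1 ≤ n2 := by omega
  have hw1S : ∀ t : Symb, (t.1 = 1 ∨ t.1 = 2) → 1 ≤ t.2 →
      t.2 ≤ (if t.1 = 1 then n1 else n2) →
      ((Equiv.swap ((1:ℕ), i) ((2:ℕ), j) t).1 = 1 ∨
        (Equiv.swap ((1:ℕ), i) ((2:ℕ), j) t).1 = 2) ∧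
        1 ≤ (Equiv.swap ((1:ℕ), i) ((2:ℕ), j) t).2 ∧
        (Equiv.swap ((1:ℕ), i) ((2:ℕ), j) t).2 ≤
          (if (Equiv.swap ((1:ℕ), i) ((2:ℕ), j) t).1 = 1 then n1 else n2) := by
    intro t hr ha hb
    by_cases hu : t = ((1:ℕ), i)
    · subst hu
      rw [Equiv.swap_apply_left]
      refine ⟨Or.inr rfl, hj1, ?_⟩
      norm_num
      omega
    · by_cases hv : t = ((2:ℕ), j)
      · subst hv
        rw [Equiv.swap_apply_right]
        exact ⟨Or.inl rfl, by omega, by norm_num; omega⟩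
      · rw [Equiv.swap_apply_of_ne_of_ne hu hv]
        exact ⟨hr, ha, hb⟩
  have hw2S : ∀ t : Symb, (if t.1 = 1 then n1 else n2) < t.2 →
      Equiv.swap ((1:ℕ), i) ((2:ℕ), j) t = t := by
    intro t hlt
    apply Equiv.swap_apply_of_ne_of_ne
    · rintro rfl
      norm_num at hlt
      omega
    · rintro rfl
      norm_num at hlt
      omega
  let cS : S15.Ctx := ⟨m1, n1, m2, n2, ξ, ξC, fun s => Equiv.swap ((1:ℕ), i) ((2:ℕ), j) s,
    hm1n, h2, hn1, hn2, hseg, hsegC, (Equiv.swap ((1:ℕ), i) ((2:ℕ), j)).injective,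
    hw1S, hw2S⟩
  let cR : S15.Ctx := ⟨m1, n1, m2, n2, ξ, ξC, fun s => s,
    hm1n, h2, hn1, hn2, hseg, hsegC, fun a b h => h,
    fun t hr h1 h2 => ⟨hr, h1, h2⟩, fun t _ => rfl⟩
  have hlen : ξ.len = ξC.len := cR.len_eq (fun s => rfl)
  constructor
  · exact cS.spec_fwd ((1:ℕ), i) ((2:ℕ), j) (fun s => rfl) hlen
  · exact cS.spec_bwd ((1:ℕ), i) ((2:ℕ), j) (fun s => rfl) hlen
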